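/- Let λ, a > 0 and let x₀ ∈ (-1,1). Consider the initial value problem -v'' = a v + λ v - 1, v(x_l) = 0, v'(x_l) ≥ 0 for x_l ∈ (-1,1). There exists δ > 0 such that for every x_l ∈ [1-δ, 1), every solution v of this problem has no zero in (x_l, 1]. -/

import Mathlib

open Real Set

/-- the auxiliary IVP -v'' = a v + λ v - 1, v(x_l) = 0,
v'(x_l) ≥ 0 has no zero in (x_l, 1] when x_l is close enough to 1. -/
theorem stmt_8 (lam a : ℝ) (hlam : 0 < lam) (ha : 0 < a)
    (x₀ : ℝ) (hx₀ : x₀ ∈ Set.Ioo (-1 : ℝ) 1) :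
    ∃ δ > (0 : ℝ), ∀ xl ∈ Set.Ico (1 - δ) (1 : ℝ), xl ∈ Set.Ioo (-1 : ℝ) 1 →
      ∀ v v' : ℝ → ℝ,
        (∀ x, HasDerivAt v (v' x) x) →
        (∀ x, HasDerivAt v' (-(a * v x + lam * v x - 1)) x) →
        v xl = 0 → 0 ≤ v' xl →
        ∀ x ∈ Set.Ioc xl (1 : ℝ), v x ≠ 0 := by
  set c : ℝ := a + lam with hc
  have hcpos : 0 < c := by positivity
  set ω : ℝ := Real.sqrt c with hωdef
  have hωpos : 0 < ω := Real.sqrt_pos.mpr hcpos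
  have hω2 : ω ^ 2 = c := Real.sq_sqrt hcpos.le
  refine ⟨π / ω, by positivity, ?_⟩
  rintro xl ⟨hxl1, hxl2⟩ _ v v' hv hv' hv0 hd0 x ⟨hx1, hx2⟩
  set d : ℝ := v' xl with hddef
  -- explicit solution
  set V : ℝ → ℝ := fun y => (1 - Real.cos (ω * (y - xl))) / c
      + d / ω * Real.sin (ω * (y - xl)) with hVdef
  set W : ℝ → ℝ := fun y => Real.sin (ω * (y - xl)) / ω
      + d * Real.cos (ω * (y - xl)) with hWdef
  have hθ : ∀ y : ℝ, HasDerivAt (fun y => ω * (y - xl)) ω y := by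
    intro y
    simpa using ((hasDerivAt_id y).sub_const xl).const_mul ω
  have hV : ∀ y, HasDerivAt V (W y) y := by
    intro y
    have h1 : HasDerivAt V (-(-Real.sin (ω * (y - xl)) * ω) / c
        + d / ω * (Real.cos (ω * (y - xl)) * ω)) y :=
      ((((hθ y).cos).const_sub 1).div_const c).add (((hθ y).sin).const_mul (d / ω))
    convert h1 using 1
    rw [hWdef, show c = ω * ω by nlinarith [hω2]]
    field_simp
  have hW : ∀ y, HasDerivAt W (1 - c * V y) y := by
    intro y
    have h1 : HasDerivAt W (Real.cos (ω * (y - xl)) * ω / ω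
        + d * (-Real.sin (ω * (y - xl)) * ω)) y :=
      (((hθ y).sin).div_const ω).add (((hθ y).cos).const_mul d)
    convert h1 using 1
    rw [hVdef, show c = ω * ω by nlinarith [hω2]]
    field_simp
    ring
  -- uniqueness of the ODE solution
  set F : ℝ → ℝ × ℝ → ℝ × ℝ := fun _ p => (p.2, 1 - c * p.1) with hFdef
  have hK : ∀ t, LipschitzWith ⟨max 1 c, le_max_of_le_left zero_le_one⟩ (F t) := by
    intro t
    apply LipschitzWith.of_dist_le_mul
    intro p q
    simp only [hFdef, Prod.dist_eq, Real.dist_eq]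
    change _ ≤ max 1 c * max |p.1 - q.1| |p.2 - q.2|
    have h1 : |p.2 - q.2| ≤ max 1 c * max |p.1 - q.1| |p.2 - q.2| := by
      calc |p.2 - q.2| ≤ max |p.1 - q.1| |p.2 - q.2| := le_max_right _ _
        _ ≤ max 1 c * max |p.1 - q.1| |p.2 - q.2| := by
            nlinarith [le_max_left (1:ℝ) c, abs_nonneg (p.1 - q.1), abs_nonneg (p.2 - q.2),
              le_max_left |p.1 - q.1| |p.2 - q.2|]
    have h2 : |1 - c * p.1 - (1 - c * q.1)| ≤ max 1 c * max |p.1 - q.1| |p.2 - q.2| := by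
      rw [show (1 - c * p.1 - (1 - c * q.1)) = c * (q.1 - p.1) by ring, abs_mul,
        abs_of_pos hcpos, abs_sub_comm q.1 p.1]
      calc c * |p.1 - q.1| ≤ max 1 c * |p.1 - q.1| := by
            nlinarith [le_max_right (1:ℝ) c, abs_nonneg (p.1 - q.1)]
        _ ≤ max 1 c * max |p.1 - q.1| |p.2 - q.2| := by
            nlinarith [le_max_left (1:ℝ) c, le_max_left |p.1 - q.1| |p.2 - q.2|]
    exact max_le h1 h2
  have hf' : ∀ y, HasDerivAt (fun y => (v y, v' y)) (F y (v y, v' y)) y := by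
    intro y
    have he : F y (v y, v' y) = (v' y, -(a * v y + lam * v y - 1)) := by
      simp only [hFdef]
      rw [Prod.mk.injEq]
      exact ⟨rfl, by ring⟩
    rw [he]
    exact (hv y).prodMk (hv' y)
  have hg' : ∀ y, HasDerivAt (fun y => (V y, W y)) (F y (V y, W y)) y := fun y =>
    (hV y).prodMk (hW y)
  have heq : (fun y => (v y, v' y)) xl = (fun y => (V y, W y)) xl := by
    simp only [hVdef, hWdef, hv0, hddef]
    norm_num
  have key : EqOn (fun y => (v y, v' y)) (fun y => (V y, W y)) (Icc xl x) :=
    ODE_solution_unique (v := F) (a := xl) (b := x) hK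
      (continuousOn_of_forall_continuousAt fun y _ => (hf' y).continuousAt)
      (fun t _ => (hf' t).hasDerivWithinAt)
      (continuousOn_of_forall_continuousAt fun y _ => (hg' y).continuousAt)
      (fun t _ => (hg' t).hasDerivWithinAt) heq
  have hvx : v x = V x := congrArg Prod.fst (key ⟨hx1.le, le_rfl⟩)
  -- positivity of the explicit solution on (xl, xl + π/ω]
  have ht0 : 0 < x - xl := by linarith
  have htπ : ω * (x - xl) ≤ π := by
    have h1 : x - xl ≤ π / ω := by linarith
    calc ω * (x - xl) ≤ ω * (π / ω) := by nlinarith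
      _ = π := by field_simp
  have hθpos : 0 < ω * (x - xl) := by positivity
  have hcos : Real.cos (ω * (x - xl)) < 1 := by
    refine lt_of_le_of_ne (Real.cos_le_one _) ?_
    intro hcontra
    have := (Real.cos_eq_one_iff_of_lt_of_lt (x := ω * (x - xl))
      (by nlinarith [Real.pi_pos]) (by nlinarith [Real.pi_pos])).mp hcontra
    linarith
  have hsin : 0 ≤ Real.sin (ω * (x - xl)) :=
    Real.sin_nonneg_of_nonneg_of_le_pi hθpos.le htπ
  have hVpos : 0 < V x := by
    have h1 : 0 < (1 - Real.cos (ω * (x - xl))) / c := by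
      apply div_pos; linarith; exact hcpos
    have h2 : 0 ≤ d / ω * Real.sin (ω * (x - xl)) := by positivity
    simp only [hVdef]
    linarith
  rw [hvx]
  exact ne_of_gt hVpos
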